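/- If every assignment to a 3CNF formula φ with m clauses leaves at least εm clauses unsatisfied (ε > 0), then in the bounded-occurrence formula ψ with M = (1 + 3d)m clauses obtained via the degree-d expander consistency construction, every assignment leaves at least ε·M/(1 + 3d) · (1) unsatisfied clauses; i.e., every assignment contradicts at least a fraction ε/(1 + 3d) of the clauses of ψ. Conversely, if φ is satisfiable then ψ is satisfiable. -/

import Mathlib

lemma countP_sum_le' {α : Type*} (l : List α) (T : Finset ℕ)
    (q : ℕ → α → Bool) (r : α → Bool)
    (hex : ∀ e ∈ l, ∀ i ∈ T, ∀ j ∈ T, q i e = true → q j e = true → i = j)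
    (himp : ∀ e ∈ l, ∀ i ∈ T, q i e = true → r e = true) :
    ∑ i ∈ T, l.countP (q i) ≤ l.countP r := by
  induction l with
  | nil => simp
  | cons a l ih =>
    simp only [List.countP_cons]
    rw [Finset.sum_add_distrib]
    have h1 : ∑ i ∈ T, l.countP (q i) ≤ l.countP r :=
      ih (fun e he => hex e (List.mem_cons_of_mem _ he))
         (fun e he => himp e (List.mem_cons_of_mem _ he))
    have h2 : (∑ i ∈ T, if q i a then 1 else 0) ≤ if r a then 1 else 0 := by
      by_cases h : ∃ i ∈ T, q i a = true
      · obtain ⟨i0, hi0, hq⟩ := h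
        have hr : r a = true := himp a (List.mem_cons_self) i0 hi0 hq
        rw [if_pos hr]
        calc (∑ i ∈ T, if q i a then 1 else 0)
            = (T.filter (fun i => q i a = true)).card := by
              rw [Finset.card_filter]
          _ ≤ 1 := Finset.card_le_one.mpr (fun x hx y hy => by
              simp only [Finset.mem_filter] at hx hy
              exact hex a (List.mem_cons_self) x hx.1 y hy.1 hx.2 hy.2)
      · push_neg at h
        have hz : ∀ i ∈ T, (if q i a then 1 else 0) = 0 := by
          intro i hi
          simp [h i hi]
        rw [Finset.sum_congr rfl hz]
        simp
    exact Nat.add_le_add h1 h2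


/-- Gap preservation in the degree-`d` expander bounded-occurrence reduction.
`ψ` consists of `m` primary clauses (one per clause of `φ`, on the occurrence variables)
and `2·|Edges| = 3dm` consistency clauses (two per expander edge, exactly one of which is
unsatisfied when the endpoints disagree), for `M = m + 3dm` clauses in total.
If every assignment to `φ` leaves at least `ε·m` clauses unsatisfied, then every
assignment to `ψ` leaves at least `(ε/(1+3d))·M` clauses unsatisfied; conversely
if `φ` is satisfiable then `ψ` is satisfiable. -/
theorem expander_reduction_gap_preservation (m d : ℕ) (hm : 0 < m) (ε : ℝ) (hε : 0 < ε)
    (φ : Fin m → Fin 3 → ℕ × Bool)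
    (Edges : List ((Fin m × Fin 3) × (Fin m × Fin 3)))
    (hEdgeVar : ∀ e ∈ Edges, (φ e.1.1 e.1.2).1 = (φ e.2.1 e.2.2).1)
    (hExpander : ∀ (i : ℕ) (S : Finset (Fin m × Fin 3)),
      (∀ p ∈ S, (φ p.1 p.2).1 = i) →
      2 * S.card ≤ (Finset.univ.filter
        (fun p : Fin m × Fin 3 => (φ p.1 p.2).1 = i)).card →
      S.card ≤ Edges.countP (fun e =>
        decide ((e.1 ∈ S ∧ e.2 ∉ S) ∨ (e.1 ∉ S ∧ e.2 ∈ S))))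
    (hdeg : ∀ v : Fin m × Fin 3,
      Edges.countP (fun e => decide (e.1 = v)) +
        Edges.countP (fun e => decide (e.2 = v)) ≤ d)
    (hlen : 2 * Edges.length = 3 * d * m)
    (hgap : ∀ σ : ℕ → Bool,
      ε * m ≤ ((Finset.univ.filter
        (fun j : Fin m => ¬ ∃ a : Fin 3, σ (φ j a).1 = (φ j a).2)).card : ℝ)) :
    (∀ b : Fin m × Fin 3 → Bool,
      (ε / (1 + 3 * d)) * ((m + 2 * Edges.length : ℕ) : ℝ) ≤
        (((Finset.univ.filter
          (fun j : Fin m => ¬ ∃ a : Fin 3, b (j, a) = (φ j a).2)).card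
          + Edges.countP (fun e => b e.1 != b e.2) : ℕ) : ℝ)) ∧
    ((∃ σ : ℕ → Bool, ∀ j : Fin m, ∃ a : Fin 3, σ (φ j a).1 = (φ j a).2) →
      ∃ b : Fin m × Fin 3 → Bool,
        (∀ j : Fin m, ∃ a : Fin 3, b (j, a) = (φ j a).2) ∧
        ∀ e ∈ Edges, b e.1 = b e.2) := by
  constructor
  · intro b
    -- majority assignment
    set σ : ℕ → Bool := fun i =>
      decide ((Finset.univ.filter
          (fun p : Fin m × Fin 3 => (φ p.1 p.2).1 = i ∧ b p = false)).card
        ≤ (Finset.univ.filter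
          (fun p : Fin m × Fin 3 => (φ p.1 p.2).1 = i ∧ b p = true)).card) with hσdef
    set Mi : ℕ → Finset (Fin m × Fin 3) := fun i =>
      Finset.univ.filter (fun p => (φ p.1 p.2).1 = i ∧ ¬ b p = σ i) with hMidef
    set U : ℕ := (Finset.univ.filter
      (fun j : Fin m => ¬ ∃ a : Fin 3, b (j, a) = (φ j a).2)).card with hUdef
    set C : ℕ := Edges.countP (fun e => b e.1 != b e.2) with hCdef
    -- majority property
    have hmaj : ∀ i, 2 * (Mi i).card ≤ (Finset.univ.filter
        (fun p : Fin m × Fin 3 => (φ p.1 p.2).1 = i)).card := by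
      intro i
      have hsplit : ((Finset.univ.filter (fun p : Fin m × Fin 3 => (φ p.1 p.2).1 = i)).filter
            (fun p => b p = σ i)).card
          + ((Finset.univ.filter (fun p : Fin m × Fin 3 => (φ p.1 p.2).1 = i)).filter
            (fun p => ¬ b p = σ i)).card
          = (Finset.univ.filter (fun p : Fin m × Fin 3 => (φ p.1 p.2).1 = i)).card :=
        Finset.card_filter_add_card_filter_not _
      have hM : Mi i = (Finset.univ.filter
          (fun p : Fin m × Fin 3 => (φ p.1 p.2).1 = i)).filter (fun p => ¬ b p = σ i) := by
        rw [hMidef]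
        simp [Finset.filter_filter]
      have hkey : (Mi i).card ≤ ((Finset.univ.filter
          (fun p : Fin m × Fin 3 => (φ p.1 p.2).1 = i)).filter (fun p => b p = σ i)).card := by
        by_cases hc : (Finset.univ.filter
              (fun p : Fin m × Fin 3 => (φ p.1 p.2).1 = i ∧ b p = false)).card
            ≤ (Finset.univ.filter
              (fun p : Fin m × Fin 3 => (φ p.1 p.2).1 = i ∧ b p = true)).card
        · have hσi : σ i = true := by rw [hσdef]; exact decide_eq_true hc
          have e1 : Mi i = Finset.univ.filter
              (fun p : Fin m × Fin 3 => (φ p.1 p.2).1 = i ∧ b p = false) := by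
            rw [hMidef]
            apply Finset.filter_congr
            intro p _
            simp [hσi]
          have e2 : (Finset.univ.filter
              (fun p : Fin m × Fin 3 => (φ p.1 p.2).1 = i)).filter (fun p => b p = σ i)
              = Finset.univ.filter
              (fun p : Fin m × Fin 3 => (φ p.1 p.2).1 = i ∧ b p = true) := by
            rw [Finset.filter_filter]
            apply Finset.filter_congr
            intro p _
            simp [hσi]
          rw [e1, e2]; exact hc
        · have hσi : σ i = false := by rw [hσdef]; simp [hc]
          push_neg at hc
          have e1 : Mi i = Finset.univ.filter
              (fun p : Fin m × Fin 3 => (φ p.1 p.2).1 = i ∧ b p = true) := by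
            rw [hMidef]
            apply Finset.filter_congr
            intro p _
            simp [hσi]
          have e2 : (Finset.univ.filter
              (fun p : Fin m × Fin 3 => (φ p.1 p.2).1 = i)).filter (fun p => b p = σ i)
              = Finset.univ.filter
              (fun p : Fin m × Fin 3 => (φ p.1 p.2).1 = i ∧ b p = false) := by
            rw [Finset.filter_filter]
            apply Finset.filter_congr
            intro p _
            simp [hσi]
          rw [e1, e2]; exact hc.le
      rw [hM] at hkey ⊢
      omega
    -- expander bound per variable
    have hexp : ∀ i, (Mi i).card ≤ Edges.countP (fun e =>
        decide ((e.1 ∈ Mi i ∧ e.2 ∉ Mi i) ∨ (e.1 ∉ Mi i ∧ e.2 ∈ Mi i))) := by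
      intro i
      apply hExpander i (Mi i)
      · intro p hp
        rw [hMidef] at hp
        exact (Finset.mem_filter.mp hp).2.1
      · exact hmaj i
    -- variable set
    set Tset : Finset ℕ := Finset.univ.image (fun p : Fin m × Fin 3 => (φ p.1 p.2).1)
      with hTdef
    -- sum of cut edges bounded by disagreement edges
    have hcut : ∑ i ∈ Tset, Edges.countP (fun e =>
        decide ((e.1 ∈ Mi i ∧ e.2 ∉ Mi i) ∨ (e.1 ∉ Mi i ∧ e.2 ∈ Mi i))) ≤ C := by
      rw [hCdef]
      apply countP_sum_le'
      · intro e he i _ j _ hq1 hq2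
        have hve := hEdgeVar e he
        have hi : (φ e.1.1 e.1.2).1 = i := by
          rcases of_decide_eq_true hq1 with ⟨h1, _⟩ | ⟨_, h2⟩
          · exact ((Finset.mem_filter.mp (hMidef ▸ h1)).2).1
          · rw [hve]; exact ((Finset.mem_filter.mp (hMidef ▸ h2)).2).1
        have hj : (φ e.1.1 e.1.2).1 = j := by
          rcases of_decide_eq_true hq2 with ⟨h1, _⟩ | ⟨_, h2⟩
          · exact ((Finset.mem_filter.mp (hMidef ▸ h1)).2).1
          · rw [hve]; exact ((Finset.mem_filter.mp (hMidef ▸ h2)).2).1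
        rw [← hi, hj]
      · intro e he i _ hq
        have hve := hEdgeVar e he
        have hne : b e.1 ≠ b e.2 := by
          rcases of_decide_eq_true hq with ⟨h1, h2⟩ | ⟨h1, h2⟩
          · obtain ⟨hv1, hb1⟩ := (Finset.mem_filter.mp (hMidef ▸ h1)).2
            have hv2 : (φ e.2.1 e.2.2).1 = i := by rw [← hve]; exact hv1
            have hb2 : b e.2 = σ i := by
              by_contra hcon
              exact h2 (hMidef ▸ Finset.mem_filter.mpr ⟨Finset.mem_univ _, hv2, hcon⟩)
            rw [hb2]; exact hb1
          · obtain ⟨hv2, hb2⟩ := (Finset.mem_filter.mp (hMidef ▸ h2)).2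
            have hv1 : (φ e.1.1 e.1.2).1 = i := by rw [hve]; exact hv2
            have hb1 : b e.1 = σ i := by
              by_contra hcon
              exact h1 (hMidef ▸ Finset.mem_filter.mpr ⟨Finset.mem_univ _, hv1, hcon⟩)
            rw [hb1]; exact fun h => hb2 h.symm
        simp [hne]
    -- disagreement set bounded by union of minority sets
    have hMsub : (Finset.univ.filter
        (fun p : Fin m × Fin 3 => ¬ b p = σ ((φ p.1 p.2).1))).card
        ≤ ∑ i ∈ Tset, (Mi i).card := by
      refine le_trans (Finset.card_le_card ?_) (Finset.card_biUnion_le)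
      intro p hp
      rw [Finset.mem_filter] at hp
      apply Finset.mem_biUnion.mpr
      refine ⟨(φ p.1 p.2).1, ?_, ?_⟩
      · rw [hTdef]; exact Finset.mem_image.mpr ⟨p, Finset.mem_univ _, rfl⟩
      · rw [hMidef]; exact Finset.mem_filter.mpr ⟨Finset.mem_univ _, rfl, hp.2⟩
    -- unsat(σ) ≤ U + |M|
    have hcover : (Finset.univ.filter
        (fun j : Fin m => ¬ ∃ a : Fin 3, σ (φ j a).1 = (φ j a).2)).card
        ≤ U + (Finset.univ.filter
        (fun p : Fin m × Fin 3 => ¬ b p = σ ((φ p.1 p.2).1))).card := by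
      have hsub : (Finset.univ.filter
          (fun j : Fin m => ¬ ∃ a : Fin 3, σ (φ j a).1 = (φ j a).2))
          ⊆ (Finset.univ.filter
            (fun j : Fin m => ¬ ∃ a : Fin 3, b (j, a) = (φ j a).2))
          ∪ (Finset.univ.filter
            (fun p : Fin m × Fin 3 => ¬ b p = σ ((φ p.1 p.2).1))).image Prod.fst := by
        intro j hj
        rw [Finset.mem_filter] at hj
        rw [Finset.mem_union]
        by_cases hu : ∃ a : Fin 3, b (j, a) = (φ j a).2
        · right
          obtain ⟨a, ha⟩ := hu
          have hne : ¬ b (j, a) = σ ((φ j a).1) := by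
            intro hcon
            exact hj.2 ⟨a, by rw [← hcon, ha]⟩
          exact Finset.mem_image.mpr ⟨(j, a),
            Finset.mem_filter.mpr ⟨Finset.mem_univ _, hne⟩, rfl⟩
        · left
          exact Finset.mem_filter.mpr ⟨Finset.mem_univ _, hu⟩
      calc (Finset.univ.filter
          (fun j : Fin m => ¬ ∃ a : Fin 3, σ (φ j a).1 = (φ j a).2)).card
          ≤ _ := Finset.card_le_card hsub
        _ ≤ _ + _ := Finset.card_union_le _ _
        _ ≤ U + _ := by rw [hUdef]; exact Nat.add_le_add_left (Finset.card_image_le) _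
    -- combine nat inequalities
    have hnat : (Finset.univ.filter
        (fun j : Fin m => ¬ ∃ a : Fin 3, σ (φ j a).1 = (φ j a).2)).card ≤ U + C := by
      have h1 := hMsub
      have h2 : ∑ i ∈ Tset, (Mi i).card ≤ ∑ i ∈ Tset, Edges.countP (fun e =>
          decide ((e.1 ∈ Mi i ∧ e.2 ∉ Mi i) ∨ (e.1 ∉ Mi i ∧ e.2 ∈ Mi i))) :=
        Finset.sum_le_sum (fun i _ => hexp i)
      omega
    -- real arithmetic
    have hR := hgap σ
    have hcast : ((Finset.univ.filter
        (fun j : Fin m => ¬ ∃ a : Fin 3, σ (φ j a).1 = (φ j a).2)).card : ℝ)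
        ≤ ((U + C : ℕ) : ℝ) := by exact_mod_cast hnat
    have hM2 : ((m + 2 * Edges.length : ℕ) : ℝ) = (1 + 3 * d) * m := by
      have : (m + 2 * Edges.length : ℕ) = (1 + 3 * d) * m := by
        rw [hlen]; ring
      rw [this]; push_cast; ring
    have hpos : (0 : ℝ) < 1 + 3 * d := by positivity
    rw [hM2]
    have : ε / (1 + 3 * d) * ((1 + 3 * d) * m) = ε * m := by
      field_simp
    rw [this]
    exact le_trans hR hcast
  · rintro ⟨σ, hσ⟩
    refine ⟨fun p => σ ((φ p.1 p.2).1), ?_, ?_⟩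
    · intro j
      obtain ⟨a, ha⟩ := hσ j
      exact ⟨a, ha⟩
    · intro e he
      simp only
      rw [hEdgeVar e he]
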